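/- Let λ denote Lebesgue measure on [0,1], f₀(x) = x and f₁(x) = x + √2 (mod 1). Then the set S = Graph(f₀) ∪ Graph(f₁) ⊆ [0,1]² is acyclic. -/

import Mathlib

open Set
open scoped Fin.NatCast Fin.CommRing

/-- The union `S` of the graphs of `f₀(x) = x` and `f₁(x) = x + √2 (mod 1)` on
`[0,1]` is an acyclic subset of `[0,1]²`: for every `k ≥ 2` and distinct points
`x₁,…,x_k`, `y₁,…,y_k`, at least one of the pairs
`(x₁,y₁),(x₁,y₂),(x₂,y₂),…,(x_k,y_k),(x_k,y₁)` lies outside `S`. -/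
theorem graphs_union_acyclic
    (S : Set (ℝ × ℝ))
    (hS : S = {p : ℝ × ℝ | p.1 ∈ Icc (0:ℝ) 1 ∧
        (p.2 = p.1 ∨ p.2 = Int.fract (p.1 + Real.sqrt 2))}) :
    ∀ (k : ℕ), 2 ≤ k → ∀ (x y : Fin k → ℝ),
      Function.Injective x → Function.Injective y →
      ∃ l : Fin k, (x l, y l) ∉ S ∨ (x l, y (finRotate k l)) ∉ S := by
  intro k hk x y hx hy
  by_contra hcon
  push_neg at hcon
  subst hS
  obtain ⟨n, rfl⟩ : ∃ n, k = n + 1 := ⟨k - 1, by omega⟩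
  set g : ℝ → ℝ := fun t => Int.fract (t + Real.sqrt 2) with hgdef
  have hP : ∀ l, y l = x l ∨ y l = g (x l) := fun l => (hcon l).1.2
  have hQ : ∀ l, y (finRotate (n+1) l) = x l ∨ y (finRotate (n+1) l) = g (x l) :=
    fun l => (hcon l).2.2
  have hgne : ∀ t : ℝ, g t ≠ t := by
    intro t h
    have h2 : Real.sqrt 2 = (⌊t + Real.sqrt 2⌋ : ℝ) := by
      have : t + Real.sqrt 2 - ⌊t + Real.sqrt 2⌋ = t := h
      linarith
    exact irrational_sqrt_two.ne_int _ h2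
  have hσ : ∀ l : Fin (n+1), finRotate (n+1) l ≠ l := by
    intro l
    have hmem : l ∈ (finRotate (n+1)).support := by
      rw [support_finRotate_of_le hk]
      exact Finset.mem_univ l
    exact Equiv.Perm.mem_support.mp hmem
  -- rule: if y l = g (x l) then y (σ l) = x l and y (σ l) = g (x (σ l))
  have hstep : ∀ l, y l = g (x l) → y (finRotate (n+1) l) = x l := by
    intro l hl
    rcases hQ l with h | h
    · exact h
    · exact absurd (hy (h.trans hl.symm)) (hσ l)
  have hstep2 : ∀ l, y l = g (x l) → y (finRotate (n+1) l) = g (x (finRotate (n+1) l)) := by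
    intro l hl
    rcases hP (finRotate (n+1) l) with h | h
    · exfalso
      exact hσ l (hx ((hstep l hl).symm.trans h)).symm
    · exact h
  -- iterate formula
  have hiter : ∀ (m : ℕ) (l : Fin (n+1)), (finRotate (n+1))^[m] l = l + (m : Fin (n+1)) := by
    intro m
    induction m with
    | zero => intro l; simp
    | succ m ih =>
      intro l
      rw [Function.iterate_succ_apply', ih, finRotate_succ_apply]
      push_cast
      ring
  -- dichotomy
  have hdich : (∀ l, y l = x l) ∨ (∀ l, y l = g (x l)) := by
    by_cases h0 : ∀ l, y l = x l
    · exact Or.inl h0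
    · right
      push_neg at h0
      obtain ⟨l₀, hl₀⟩ := h0
      have hl₀' : y l₀ = g (x l₀) := (hP l₀).resolve_left hl₀
      have hall : ∀ m : ℕ, y ((finRotate (n+1))^[m] l₀) = g (x ((finRotate (n+1))^[m] l₀)) := by
        intro m
        induction m with
        | zero => simpa using hl₀'
        | succ m ih =>
          rw [Function.iterate_succ_apply']
          exact hstep2 _ ih
      intro m
      have := hall ((m - l₀ : Fin (n+1)).val)
      rwa [hiter, Fin.cast_val_eq_self, add_sub_cancel] at this
  -- in either case, ∑ g (x l) = ∑ x l
  have hsum : ∑ l, g (x l) = ∑ l, x l := by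
    rcases hdich with h | h
    · -- y l = x l everywhere; then x (σ l) = g (x l)
      have key : ∀ l, x (finRotate (n+1) l) = g (x l) := by
        intro l
        rcases hQ l with hq | hq
        · exact absurd (hx ((h _).symm.trans hq)) (hσ l)
        · exact (h _).symm.trans hq
      calc ∑ l, g (x l) = ∑ l, x (finRotate (n+1) l) := by
            exact Finset.sum_congr rfl fun l _ => (key l).symm
        _ = ∑ l, x l := Equiv.sum_comp (finRotate (n+1)) x
    · -- y l = g (x l) everywhere; then x l = g (x (σ l))
      have key : ∀ l, x l = g (x (finRotate (n+1) l)) := by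
        intro l
        exact (hstep l (h l)).symm.trans (h _)
      calc ∑ l, g (x l) = ∑ l, g (x (finRotate (n+1) l)) :=
            (Equiv.sum_comp (finRotate (n+1)) (g ∘ x)).symm
        _ = ∑ l, x l := Finset.sum_congr rfl fun l _ => (key l).symm
  -- derive contradiction
  have hfract : ∀ l, g (x l) = x l + Real.sqrt 2 - (⌊x l + Real.sqrt 2⌋ : ℝ) := by
    intro l; rfl
  have hsum2 : ((n+1 : ℕ) : ℝ) * Real.sqrt 2 = ((∑ l, ⌊x l + Real.sqrt 2⌋ : ℤ) : ℝ) := by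
    have := hsum
    simp only [hfract] at this
    rw [Finset.sum_sub_distrib, Finset.sum_add_distrib, Finset.sum_const] at this
    push_cast
    simp at this ⊢
    linarith
  exact (irrational_sqrt_two.natCast_mul (by omega : (n+1 : ℕ) ≠ 0)).ne_int _ hsum2
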